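/- For every m ≥ 1, the complete graph K_{2m} admits a one-factorization: its edge set can be partitioned into 2m - 1 perfect matchings. -/

import Mathlib

private lemma walecki_modeq_eq {n a b : ℕ} (h : a ≡ b [MOD n]) (ha : a < n) (hb : b < n) :
    a = b := by
  unfold Nat.ModEq at h
  rwa [Nat.mod_eq_of_lt ha, Nat.mod_eq_of_lt hb] at h

private lemma walecki_two_cancel {n a b : ℕ} (hn : Odd n) (h : 2 * a ≡ 2 * b [MOD n]) :
    a ≡ b [MOD n] :=
  Nat.ModEq.cancel_left_of_coprime (by simpa [Nat.coprime_comm] using hn.coprime_two_left) h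

private lemma walecki_addn {n a : ℕ} : a + n ≡ a [MOD n] := by
  simp [Nat.ModEq, Nat.add_mod_right]

private lemma walecki_mod_key (n c u : ℕ) (hu : u < n) :
    (2 * c + n - u) % n + u ≡ 2 * c [MOD n] :=
  calc (2 * c + n - u) % n + u
      ≡ (2 * c + n - u) + u [MOD n] := (Nat.mod_modEq _ _).add_right u
    _ = 2 * c + n := by omega
    _ ≡ 2 * c [MOD n] := walecki_addn

/-- The partner of vertex `u` in the `i`-th one-factor of `K_{2m}`. -/
private def wPartner (m : ℕ) (hm : 1 ≤ m) (i : Fin (2 * m - 1)) (u : Fin (2 * m)) :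
    Fin (2 * m) :=
  if u.val = 2 * m - 1 then ⟨i.val, by have := i.isLt; omega⟩
  else if u.val = i.val then ⟨2 * m - 1, by omega⟩
  else ⟨(2 * i.val + (2 * m - 1) - u.val) % (2 * m - 1),
    by have := Nat.mod_lt (2 * i.val + (2 * m - 1) - u.val) (y := 2 * m - 1) (by omega); omega⟩

private lemma wPartner_def1 {m : ℕ} (hm : 1 ≤ m) (i : Fin (2 * m - 1)) {u : Fin (2 * m)}
    (h : u.val = 2 * m - 1) : (wPartner m hm i u).val = i.val := by
  unfold wPartner; rw [if_pos h]

private lemma wPartner_def2 {m : ℕ} (hm : 1 ≤ m) (i : Fin (2 * m - 1)) {u : Fin (2 * m)}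
    (h1 : u.val ≠ 2 * m - 1) (h2 : u.val = i.val) : (wPartner m hm i u).val = 2 * m - 1 := by
  unfold wPartner; rw [if_neg h1, if_pos h2]

private lemma wPartner_def3 {m : ℕ} (hm : 1 ≤ m) (i : Fin (2 * m - 1)) {u : Fin (2 * m)}
    (h1 : u.val ≠ 2 * m - 1) (h2 : u.val ≠ i.val) :
    (wPartner m hm i u).val = (2 * i.val + (2 * m - 1) - u.val) % (2 * m - 1) := by
  unfold wPartner; rw [if_neg h1, if_neg h2]

private lemma walecki_odd (m : ℕ) (hm : 1 ≤ m) : Odd (2 * m - 1) := ⟨m - 1, by omega⟩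

private lemma wPartner_ne (m : ℕ) (hm : 1 ≤ m) (i : Fin (2 * m - 1)) (u : Fin (2 * m)) :
    wPartner m hm i u ≠ u := by
  have hi := i.isLt
  have hu := u.isLt
  intro h
  apply Fin.val_eq_of_eq at h
  by_cases h1 : u.val = 2 * m - 1
  · rw [wPartner_def1 hm i h1] at h; omega
  by_cases h2 : u.val = i.val
  · rw [wPartner_def2 hm i h1 h2] at h; omega
  · rw [wPartner_def3 hm i h1 h2] at h
    have hkey := walecki_mod_key (2 * m - 1) i.val u.val (by omega)
    rw [h] at hkey
    have h3 : 2 * u.val ≡ 2 * i.val [MOD 2 * m - 1] := by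
      simpa [two_mul] using hkey
    have := walecki_modeq_eq (walecki_two_cancel (walecki_odd m hm) h3) (by omega) (by omega)
    omega

private lemma wPartner_invol (m : ℕ) (hm : 1 ≤ m) (i : Fin (2 * m - 1)) (u : Fin (2 * m)) :
    wPartner m hm i (wPartner m hm i u) = u := by
  have hi := i.isLt
  have hu := u.isLt
  apply Fin.ext
  by_cases h1 : u.val = 2 * m - 1
  · have e1 : (wPartner m hm i u).val = i.val := wPartner_def1 hm i h1
    rw [wPartner_def2 hm i (by omega) e1, h1]
  by_cases h2 : u.val = i.val
  · have e1 : (wPartner m hm i u).val = 2 * m - 1 := wPartner_def2 hm i h1 h2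
    rw [wPartner_def1 hm i e1, h2]
  · have e1 : (wPartner m hm i u).val = (2 * i.val + (2 * m - 1) - u.val) % (2 * m - 1) :=
      wPartner_def3 hm i h1 h2
    set a := (2 * i.val + (2 * m - 1) - u.val) % (2 * m - 1) with ha
    have halt : a < 2 * m - 1 := Nat.mod_lt _ (by omega)
    have hkey : a + u.val ≡ 2 * i.val [MOD 2 * m - 1] :=
      walecki_mod_key (2 * m - 1) i.val u.val (by omega)
    have hane : a ≠ i.val := by
      intro h
      rw [h] at hkey
      have h3 : i.val + u.val ≡ i.val + i.val [MOD 2 * m - 1] := by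
        simpa [two_mul] using hkey
      have := walecki_modeq_eq (Nat.ModEq.add_left_cancel' i.val h3) (by omega) (by omega)
      omega
    have e2 := wPartner_def3 hm i (u := wPartner m hm i u)
      (by rw [e1]; omega) (by rw [e1]; exact hane)
    rw [e1] at e2
    rw [e2]
    have hkey2 : (2 * i.val + (2 * m - 1) - a) % (2 * m - 1) + a ≡ 2 * i.val [MOD 2 * m - 1] :=
      walecki_mod_key (2 * m - 1) i.val a (by omega)
    have h4 : (2 * i.val + (2 * m - 1) - a) % (2 * m - 1) + a
        ≡ u.val + a [MOD 2 * m - 1] := by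
      refine hkey2.trans ?_
      have := hkey.symm
      rwa [Nat.add_comm a u.val] at this
    exact walecki_modeq_eq (Nat.ModEq.add_right_cancel' a h4)
      (Nat.mod_lt _ (by omega)) (by omega)

private lemma wPartner_existsUnique (m : ℕ) (hm : 1 ≤ m) (u v : Fin (2 * m)) (huv : u ≠ v) :
    ∃! i : Fin (2 * m - 1), wPartner m hm i u = v := by
  have hu := u.isLt
  have hv := v.isLt
  have hodd := walecki_odd m hm
  have huvval : u.val ≠ v.val := fun h => huv (Fin.ext h)
  by_cases h1 : u.val = 2 * m - 1
  · -- u is ∞ ; unique i = v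
    refine ⟨⟨v.val, by omega⟩, Fin.ext (by rw [wPartner_def1 hm _ h1]), ?_⟩
    intro j hj
    apply Fin.val_eq_of_eq at hj
    rw [wPartner_def1 hm j h1] at hj
    exact Fin.ext (by simpa using hj)
  by_cases h2 : v.val = 2 * m - 1
  · -- v is ∞ ; unique i = u
    refine ⟨⟨u.val, by omega⟩, Fin.ext (by rw [wPartner_def2 hm _ h1 rfl, h2]), ?_⟩
    intro j hj
    apply Fin.val_eq_of_eq at hj
    by_cases h3 : u.val = j.val
    · exact Fin.ext (by simpa using h3.symm)
    · rw [wPartner_def3 hm j h1 h3] at hj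
      have := Nat.mod_lt (2 * j.val + (2 * m - 1) - u.val) (y := 2 * m - 1) (by omega)
      omega
  · -- both finite; unique i with 2i ≡ u + v
    set iv := (m * (u.val + v.val)) % (2 * m - 1) with hiv
    have hivlt : iv < 2 * m - 1 := Nat.mod_lt _ (by omega)
    have h2m : 2 * m ≡ 1 [MOD 2 * m - 1] := by
      have : 1 + (2 * m - 1) = 2 * m := by omega
      simpa [this] using (walecki_addn (n := 2 * m - 1) (a := 1))
    have hkey : 2 * iv ≡ u.val + v.val [MOD 2 * m - 1] := by
      calc 2 * iv ≡ 2 * (m * (u.val + v.val)) [MOD 2 * m - 1] :=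
            (Nat.mod_modEq _ _).mul_left 2
        _ = (2 * m) * (u.val + v.val) := by ring
        _ ≡ 1 * (u.val + v.val) [MOD 2 * m - 1] := h2m.mul_right _
        _ = u.val + v.val := by ring
    have hune : u.val ≠ iv := by
      intro h
      have h' : 2 * iv ≡ u.val + v.val [MOD 2 * m - 1] := hkey
      rw [← h] at h'
      have h3 : u.val + u.val ≡ u.val + v.val [MOD 2 * m - 1] := by
        simpa [two_mul] using h'
      have := walecki_modeq_eq (Nat.ModEq.add_left_cancel' u.val h3) (by omega) (by omega)
      omega
    refine ⟨⟨iv, hivlt⟩, ?_, ?_⟩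
    · apply Fin.ext
      rw [wPartner_def3 hm _ h1 hune]
      have hk := walecki_mod_key (2 * m - 1) iv u.val (by omega)
      have h4 : (2 * iv + (2 * m - 1) - u.val) % (2 * m - 1) + u.val
          ≡ v.val + u.val [MOD 2 * m - 1] := by
        refine hk.trans (hkey.trans ?_)
        rw [Nat.add_comm]
      exact walecki_modeq_eq (Nat.ModEq.add_right_cancel' u.val h4)
        (Nat.mod_lt _ (by omega)) (by omega)
    · intro j hj
      apply Fin.val_eq_of_eq at hj
      by_cases h3 : u.val = j.val
      · rw [wPartner_def2 hm j h1 h3] at hj; omega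
      · rw [wPartner_def3 hm j h1 h3] at hj
        have hk := walecki_mod_key (2 * m - 1) j.val u.val (by omega)
        rw [hj] at hk
        -- hk : v + u ≡ 2j
        have h5 : 2 * j.val ≡ 2 * iv [MOD 2 * m - 1] := by
          refine hk.symm.trans ?_
          rw [Nat.add_comm]
          exact hkey.symm
        have := walecki_two_cancel hodd h5
        exact Fin.ext (walecki_modeq_eq this j.isLt hivlt)

/-- Walecki's theorem: for every `m ≥ 1` the complete graph `K_{2m}` admits a
one-factorization, i.e. its edge set is partitioned into `2m - 1` perfect matchings. -/
theorem complete_graph_one_factorization (m : ℕ) (hm : 1 ≤ m) :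
    ∃ M : Fin (2 * m - 1) → (⊤ : SimpleGraph (Fin (2 * m))).Subgraph,
      (∀ i, (M i).IsPerfectMatching) ∧
      (∀ u v : Fin (2 * m), u ≠ v → ∃! i, (M i).Adj u v) := by
  refine ⟨fun i =>
    { verts := Set.univ
      Adj := fun u v => u ≠ v ∧ v = wPartner m hm i u
      adj_sub := fun h => by simpa using h.1
      edge_vert := fun _ => Set.mem_univ _
      symm := ⟨fun u v h => by
        refine ⟨h.1.symm, ?_⟩
        rw [h.2, wPartner_invol]⟩ }, ?_, ?_⟩
  · intro i
    constructor
    · intro v _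
      exact ⟨wPartner m hm i v, ⟨(wPartner_ne m hm i v).symm, rfl⟩, fun w hw => hw.2⟩
    · intro v
      exact Set.mem_univ v
  · intro u v huv
    obtain ⟨i, hi, hiu⟩ := wPartner_existsUnique m hm u v huv
    exact ⟨i, ⟨huv, hi.symm⟩, fun j hj => hiu j hj.2.symm⟩
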